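/- For ω ∈ R^3 with ω ≠ 0, the matrix exponential of ω^× is given by Rodrigues' formula: exp(ω^×) = I + (sin‖ω‖/‖ω‖) ω^× + ((1 - cos‖ω‖)/‖ω‖²) (ω^×)². -/

import Mathlib

open Matrix
open Nat

def hat (w : Fin 3 → ℝ) : Matrix (Fin 3) (Fin 3) ℝ :=
  !![0, -w 2, w 1; w 2, 0, -w 0; -w 1, w 0, 0]

noncomputable def enorm3 (w : Fin 3 → ℝ) : ℝ := Real.sqrt (w ⬝ᵥ w)

lemma hat_cube (w : Fin 3 → ℝ) : hat w ^ 3 = (-(w ⬝ᵥ w)) • hat w := by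
  ext i j
  fin_cases i <;> fin_cases j <;>
    simp [hat, pow_succ, Matrix.mul_apply, Fin.sum_univ_three, dotProduct, Fin.sum_univ_succ] <;>
    ring

lemma hat_pow_odd (w : Fin 3 → ℝ) (k : ℕ) :
    hat w ^ (2 * k + 1) = ((-(w ⬝ᵥ w)) ^ k) • hat w := by
  induction k with
  | zero => simp
  | succ k ih =>
    have h : 2 * (k + 1) + 1 = (2 * k + 1) + 2 := by ring
    rw [h, pow_add, ih, Matrix.smul_mul, ← pow_succ' (hat w) 2, hat_cube, smul_smul, pow_succ,
      mul_comm]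

lemma hat_pow_even (w : Fin 3 → ℝ) (k : ℕ) :
    hat w ^ (2 * k + 2) = ((-(w ⬝ᵥ w)) ^ k) • hat w ^ 2 := by
  have h : 2 * k + 2 = (2 * k + 1) + 1 := by ring
  rw [h, pow_succ, hat_pow_odd, Matrix.smul_mul, ← pow_two]

set_option maxHeartbeats 1000000 in
theorem rodrigues_formula (ω : Fin 3 → ℝ) (hω : ω ≠ 0) :
    NormedSpace.exp (hat ω) =
      1 + (Real.sin (enorm3 ω) / enorm3 ω) • hat ω
        + ((1 - Real.cos (enorm3 ω)) / (enorm3 ω) ^ 2) • (hat ω) ^ 2 := by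
  set A := hat ω with hA
  set θ := enorm3 ω with hθdef
  have hd0 : 0 ≤ ω ⬝ᵥ ω := by
    apply Finset.sum_nonneg; intro i _; exact mul_self_nonneg _
  have hθ2 : θ ^ 2 = ω ⬝ᵥ ω := Real.sq_sqrt hd0
  have hθ : θ ≠ 0 := by
    intro h
    apply hω
    have h0 : ω ⬝ᵥ ω = 0 := by rw [← hθ2, h]; ring
    exact (dotProduct_self_eq_zero).1 h0
  have hneg : ∀ k : ℕ, (-θ ^ 2 : ℝ) ^ k = (-1) ^ k * θ ^ (2 * k) := fun k => by
    rw [neg_pow, pow_mul]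
  -- scalar sums
  have hsin : HasSum (fun k : ℕ => (((2 * k + 1)! : ℝ)⁻¹ * (-θ ^ 2) ^ k)) (Real.sin θ / θ) := by
    have h := (Real.hasSum_sin θ).mul_right θ⁻¹
    convert h using 1
    · rfl
    funext k
    rw [hneg, pow_succ]
    field_simp
    ring
  have hcos : HasSum (fun k : ℕ => (((2 * k + 2)! : ℝ)⁻¹ * (-θ ^ 2) ^ k))
      ((1 - Real.cos θ) / θ ^ 2) := by
    have h1 : HasSum (fun k : ℕ => ((-1 : ℝ) ^ (k + 1) * θ ^ (2 * (k + 1)) / ↑(2 * (k + 1))!))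
        (Real.cos θ - 1) := by
      refine (hasSum_nat_add_iff
        (f := fun k : ℕ => ((-1 : ℝ) ^ k * θ ^ (2 * k) / ↑(2 * k)!)) 1).mpr ?_
      convert Real.hasSum_cos θ using 1
      · rfl
      simp
    have h := h1.mul_right (-(θ ^ 2)⁻¹)
    convert h using 1
    · rfl
    · funext k
      have hnat : 2 * (k + 1) = 2 * k + 2 := by ring
      rw [hnat, hneg, pow_succ, show θ ^ (2 * k + 2) = θ ^ (2 * k) * θ ^ 2 from by ring]
      have hθsq : (θ : ℝ) ^ 2 ≠ 0 := pow_ne_zero _ hθ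
      field_simp
    · have hθsq : (θ : ℝ) ^ 2 ≠ 0 := pow_ne_zero _ hθ
      field_simp
      ring
  -- matrix sums
  have hO : HasSum (fun k : ℕ => (((2 * k + 1)! : ℝ)⁻¹) • A ^ (2 * k + 1))
      ((Real.sin θ / θ) • A) := by
    have h := hsin.smul_const A
    convert h using 1
    funext k
    rw [show A ^ (2 * k + 1) = ((-(ω ⬝ᵥ ω)) ^ k) • A from hat_pow_odd ω k, ← hθ2, smul_smul]
  have hE : HasSum (fun k : ℕ => (((2 * k)! : ℝ)⁻¹) • A ^ (2 * k))
      (((1 - Real.cos θ) / θ ^ 2) • A ^ 2 + 1) := by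
    have h2 : HasSum (fun k : ℕ => (((2 * (k + 1))! : ℝ)⁻¹) • A ^ (2 * (k + 1)))
        (((1 - Real.cos θ) / θ ^ 2) • A ^ 2) := by
      have h := hcos.smul_const (A ^ 2)
      convert h using 1
      funext k
      rw [show 2 * (k + 1) = 2 * k + 2 from by ring,
        show A ^ (2 * k + 2) = ((-(ω ⬝ᵥ ω)) ^ k) • A ^ 2 from hat_pow_even ω k, ← hθ2, smul_smul]
    have h3 := (hasSum_nat_add_iff
      (f := fun k : ℕ => (((2 * k)! : ℝ)⁻¹) • A ^ (2 * k)) 1).mp h2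
    simpa using h3
  have hall := HasSum.even_add_odd (f := fun n : ℕ => ((n ! : ℝ)⁻¹) • A ^ n) hE hO
  rw [NormedSpace.exp_eq_tsum ℝ]
  exact hall.tsum_eq.trans (by abel)
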